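/- Let Δ = {x_0,…,x_d} be a regular simplex of edge length 1 in ℝ^d, and let {y_0,…,y_d} be points with ‖y_i - x_i‖ ≤ γ for all i, where 0 < γ ≤ 1/4. Suppose for each pair i ≠ j the linear constraint ⟨y_i - y_j, x_i - x_j⟩ ≤ 1 holds. Then ‖y_i - y_j‖ ≤ 1 + 4γ² for all i ≠ j. -/
import Mathlib


open RealInnerProductSpace

theorem refined_witness_diameter
    (d : ℕ) (x y : Fin (d + 1) → EuclideanSpace ℝ (Fin d))
    (hedge : ∀ i j, i ≠ j → ‖x i - x j‖ = 1)
    (γ : ℝ) (hγ : 0 < γ) (hγ2 : γ ≤ 1 / 4)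
    (hclose : ∀ i, ‖y i - x i‖ ≤ γ)
    (hconstraint : ∀ i j, i ≠ j → ⟪y i - y j, x i - x j⟫ ≤ 1) :
    ∀ i j, i ≠ j → ‖y i - y j‖ ≤ 1 + 4 * γ ^ 2 := by
  intro i j hij
  set u := x i - x j with hu_def
  set v := y i - y j with hv_def
  have hu : ‖u‖ = 1 := hedge i j hij
  have hvu : ‖v - u‖ ≤ 2 * γ := by
    have h : v - u = (y i - x i) - (y j - x j) := by rw [hu_def, hv_def]; abel
    rw [h]
    calc ‖(y i - x i) - (y j - x j)‖ ≤ ‖y i - x i‖ + ‖y j - x j‖ := norm_sub_le _ _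
      _ ≤ γ + γ := add_le_add (hclose i) (hclose j)
      _ = 2 * γ := by ring
  set t := ⟪v, u⟫ with ht_def
  have ht1 : t ≤ 1 := hconstraint i j hij
  have huu : ⟪u, u⟫ = 1 := by
    rw [real_inner_self_eq_norm_sq, hu]; norm_num
  have ht2 : 1 - 2 * γ ≤ t := by
    have h1 : ⟪v - u, u⟫ = t - 1 := by rw [inner_sub_left, huu]
    have h2 : |⟪v - u, u⟫| ≤ ‖v - u‖ * ‖u‖ := abs_real_inner_le_norm _ _
    rw [h1, hu, mul_one] at h2
    have h3 := (abs_le.mp h2).1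
    linarith
  set w := v - t • u with hw_def
  have hwu : ⟪w, u⟫ = 0 := by
    rw [hw_def, inner_sub_left, real_inner_smul_left, huu]; ring
  have hv_sq : ‖v‖ ^ 2 = ‖w‖ ^ 2 + t ^ 2 := by
    have hv : v = w + t • u := by rw [hw_def]; abel
    rw [hv, norm_add_sq_real, real_inner_smul_right, hwu, norm_smul, hu]
    simp [Real.norm_eq_abs, sq_abs]
  have hvu_sq : ‖v - u‖ ^ 2 = ‖w‖ ^ 2 + (t - 1) ^ 2 := by
    have hv : v - u = w + (t - 1) • u := by
      rw [hw_def, sub_smul, one_smul]; abel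
    rw [hv, norm_add_sq_real, real_inner_smul_right, hwu, norm_smul, hu]
    simp [Real.norm_eq_abs, sq_abs]
  have hw_le : ‖w‖ ^ 2 ≤ 4 * γ ^ 2 := by
    have h1 : ‖v - u‖ ^ 2 ≤ (2 * γ) ^ 2 := by
      have := norm_nonneg (v - u)
      nlinarith
    nlinarith [sq_nonneg (t - 1)]
  have hv_le : ‖v‖ ^ 2 ≤ 1 + 4 * γ ^ 2 := by nlinarith
  nlinarith [norm_nonneg v, sq_nonneg (‖v‖ - 1), sq_nonneg γ]
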